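/- arXiv:2211.00624 — 4 statements merged into one kernel-verified Lean document; each statement's English description precedes it below -/
import Mathlib

section
/- Let G ⊆ ℝ² be a bounded domain with |G| > 0 and suppose there exists β₀ > 0 such that ∫_G e^{φ} ≤ |G| exp((1/(4β₀))∫_G |∇φ|² + (1/|G|)∫_G φ) for all φ ∈ W^{1,2}(G). Then for all φ ∈ W^{1,2}(G), all positive ψ ∈ L^p(G) with p > 1, and all a > 0, ∫_G φ(ψ − ψ̄) ≤ (1/a)∫_G ψ ln(ψ/ψ̄) + (a/(4β₀))·(∫_G ψ)·∫_G |∇φ|², where ψ̄ := (1/|G|)∫_G ψ. -/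
open MeasureTheory Real

lemma young_ent (u v : ℝ) (hv : 0 < v) : u * v ≤ Real.exp u + v * Real.log v - v := by
  have h := Real.add_one_le_exp (u - Real.log v)
  rw [Real.exp_sub, Real.exp_log hv] at h
  have h2 := mul_le_mul_of_nonneg_right h hv.le
  rw [div_mul_cancel₀ _ hv.ne'] at h2
  nlinarith

lemma grad_const_mul (φ : EuclideanSpace ℝ (Fin 2) → ℝ) (a : ℝ) (ha : a ≠ 0) :
    ∀ x, gradient (fun y => a * φ y) x = a • gradient φ x := by
  intro x
  by_cases h : DifferentiableAt ℝ φ x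
  · rw [gradient, gradient, fderiv_const_mul h a, _root_.map_smul _ _ _]
  · have h2 : ¬ DifferentiableAt ℝ (fun y => a * φ y) x := by
      intro hc
      have := hc.const_mul a⁻¹
      simp only [← mul_assoc, inv_mul_cancel₀ ha, one_mul] at this
      exact h this
    rw [gradient_eq_zero_of_not_differentiableAt h,
        gradient_eq_zero_of_not_differentiableAt h2, smul_zero]

/-- The first main functional inequality (1.1), derived from the optimal-constant
Trudinger–Moser inequality. -/
theorem stmt_6 (G : Set (EuclideanSpace ℝ (Fin 2))) (hG : MeasurableSet G)
    (hGpos : 0 < volume G) (hGfin : volume G < ⊤)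
    (β₀ : ℝ) (hβ₀ : 0 < β₀)
    (hTM : ∀ φ : EuclideanSpace ℝ (Fin 2) → ℝ, DifferentiableOn ℝ φ G →
      IntegrableOn φ G → IntegrableOn (fun x => ‖gradient φ x‖ ^ 2) G →
      ∫⁻ x in G, ENNReal.ofReal (Real.exp (φ x)) ≤
        ENNReal.ofReal ((volume G).toReal *
          Real.exp ((1 / (4 * β₀)) * ∫ x in G, ‖gradient φ x‖ ^ 2 +
            (volume G).toReal⁻¹ * ∫ x in G, φ x)))
    (φ : EuclideanSpace ℝ (Fin 2) → ℝ) (hφd : DifferentiableOn ℝ φ G)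
    (hφi : IntegrableOn φ G)
    (hφg : IntegrableOn (fun x => ‖gradient φ x‖ ^ 2) G)
    (ψ : EuclideanSpace ℝ (Fin 2) → ℝ) (hψpos : ∀ x ∈ G, 0 < ψ x)
    (p : ℝ) (hp : 1 < p) (hψLp : IntegrableOn (fun x => ψ x ^ p) G)
    (hψint : IntegrableOn ψ G)
    (a : ℝ) (ha : 0 < a)
    (hφψ : IntegrableOn (fun x => φ x * ψ x) G)
    (hent : IntegrableOn
      (fun x => ψ x * Real.log (ψ x / ((volume G).toReal⁻¹ * ∫ y in G, ψ y))) G) :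
    (∫ x in G, φ x * (ψ x - (volume G).toReal⁻¹ * ∫ y in G, ψ y)) ≤
      (1 / a) * (∫ x in G, ψ x * Real.log (ψ x / ((volume G).toReal⁻¹ * ∫ y in G, ψ y))) +
        (a / (4 * β₀)) * (∫ x in G, ψ x) * ∫ x in G, ‖gradient φ x‖ ^ 2 := by
  set μG := (volume G).toReal with hμGdef
  have hμGpos : 0 < μG := ENNReal.toReal_pos hGpos.ne' hGfin.ne
  set S := ∫ y in G, ψ y with hSdef
  set D := ∫ x in G, ‖gradient φ x‖ ^ 2 with hDdef
  set I := ∫ x in G, φ x with hIdef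
  set Ent := ∫ x in G, ψ x * Real.log (ψ x / (μG⁻¹ * S)) with hEntdef
  have hDnn : 0 ≤ D := setIntegral_nonneg hG (fun x _ => sq_nonneg _)
  have hSpos : 0 < S := by
    rw [hSdef]
    refine (setIntegral_pos_iff_support_of_nonneg_ae ?_ hψint).mpr ?_
    · filter_upwards [ae_restrict_mem hG] with x hx using (hψpos x hx).le
    · refine lt_of_lt_of_le hGpos (measure_mono fun x hx => ⟨(hψpos x hx).ne', hx⟩)
  set ψb := μG⁻¹ * S with hψbdef
  have hψbpos : 0 < ψb := mul_pos (inv_pos.mpr hμGpos) hSpos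
  set t := μG⁻¹ * (a * I) with htdef
  -- gradient of a • φ - t
  have hgrad := grad_const_mul φ a ha.ne'
  have hgrad' : ∀ x, gradient (fun y => a * φ y - t) x = a • gradient φ x := by
    intro x
    have h0 : fderiv ℝ (fun y => a * φ y - t) x = fderiv ℝ (fun y => a * φ y) x :=
      fderiv_sub_const t
    rw [gradient, h0]
    exact hgrad x
  have hgradsq : (fun x => ‖gradient (fun y => a * φ y - t) x‖ ^ 2)
      = fun x => a ^ 2 * ‖gradient φ x‖ ^ 2 := by
    funext x
    rw [hgrad' x, norm_smul, Real.norm_eq_abs, mul_pow, sq_abs]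
  have htconst : IntegrableOn (fun _ => t) G := integrableOn_const hGfin.ne
  -- apply the Trudinger–Moser hypothesis to a * φ - t
  have hTM' := hTM (fun x => a * φ x - t) ((hφd.const_mul a).sub_const t)
    ((hφi.const_mul a).sub htconst)
    (by rw [hgradsq]; exact hφg.const_mul _)
  have hIφ' : (∫ x in G, (a * φ x - t)) = 0 := by
    rw [integral_sub (hφi.const_mul a) htconst, integral_const_mul, setIntegral_const,
      smul_eq_mul, htdef]
    field_simp [hμGpos.ne']
    show a * ((∫ x in G, φ x) * μG - μG * I) = μG * 0
    rw [← hIdef]; ring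
  rw [show ((1 / (4 * β₀)) * ∫ x in G, ‖gradient (fun y => a * φ y - t) x‖ ^ 2 +
        μG⁻¹ * ∫ x in G, (a * φ x - t))
      = (1 / (4 * β₀)) * ∫ x in G, (‖gradient (fun y => a * φ y - t) x‖ ^ 2 + μG⁻¹ * 0)
        from by rw [hIφ'],
    show (∫ x in G, (‖gradient (fun y => a * φ y - t) x‖ ^ 2 + μG⁻¹ * 0)) = a ^ 2 * D
        from by simp only [mul_zero, add_zero]; rw [hgradsq]; exact integral_const_mul _ _]
    at hTM'
  set c' := 1 / (4 * β₀) * (a ^ 2 * D) with hc'def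
  set c := t + c' with hcdef
  -- integrability of exp (a * φ - t)
  have hEmeas : AEStronglyMeasurable (fun x => Real.exp (a * φ x - t)) (volume.restrict G) :=
    Real.continuous_exp.comp_aestronglyMeasurable
      ((hφi.aestronglyMeasurable.const_mul a).sub aestronglyMeasurable_const)
  have hE : IntegrableOn (fun x => Real.exp (a * φ x - t)) G := by
    refine ⟨hEmeas, ?_⟩
    rw [hasFiniteIntegral_iff_ofReal (ae_of_all _ fun x => (Real.exp_pos _).le)]
    exact lt_of_le_of_lt hTM' ENNReal.ofReal_lt_top
  -- integral bound from the lintegral bound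
  have hEbound : ∫ x in G, Real.exp (a * φ x - t) ≤ μG * Real.exp c' := by
    rw [integral_eq_lintegral_of_nonneg_ae (ae_of_all _ fun x => (Real.exp_pos _).le) hEmeas]
    calc (∫⁻ x in G, ENNReal.ofReal (Real.exp (a * φ x - t))).toReal
        ≤ (ENNReal.ofReal (μG * Real.exp c')).toReal :=
          ENNReal.toReal_mono ENNReal.ofReal_ne_top hTM'
      _ = μG * Real.exp c' := ENNReal.toReal_ofReal (by positivity)
  -- the two functions to compare
  set f1 : EuclideanSpace ℝ (Fin 2) → ℝ :=
    fun x => a * ψb⁻¹ * (φ x * ψ x) - c * ψb⁻¹ * ψ x with hf1def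
  set f2 : EuclideanSpace ℝ (Fin 2) → ℝ :=
    fun x => Real.exp (a * φ x - t) / Real.exp c'
      + ψb⁻¹ * (ψ x * Real.log (ψ x / ψb)) - ψb⁻¹ * ψ x with hf2def
  have hf1i : IntegrableOn f1 G := (hφψ.const_mul _).sub (hψint.const_mul _)
  have hf2i : IntegrableOn f2 G :=
    ((hE.div_const _).add (hent.const_mul _)).sub (hψint.const_mul _)
  have hpt : ∀ x ∈ G, f1 x ≤ f2 x := by
    intro x hx
    have hv : (0:ℝ) < ψb⁻¹ * ψ x := mul_pos (inv_pos.mpr hψbpos) (hψpos x hx)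
    have hy := young_ent (a * φ x - c) (ψb⁻¹ * ψ x) hv
    rw [show a * φ x - c = a * φ x - t - c' from by rw [hcdef]; ring, Real.exp_sub] at hy
    have hlog : ψ x / ψb = ψb⁻¹ * ψ x := div_eq_inv_mul _ _
    simp only [hf1def, hf2def, hlog]
    nlinarith [hy]
  have hmono : ∫ x in G, f1 x ≤ ∫ x in G, f2 x := setIntegral_mono_on hf1i hf2i hG hpt
  -- compute both integrals
  have hInt1 : ∫ x in G, f1 x = a * ψb⁻¹ * (∫ x in G, φ x * ψ x) - c * ψb⁻¹ * S := by
    rw [hf1def, integral_sub (hφψ.const_mul _) (hψint.const_mul _),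
      integral_const_mul, integral_const_mul]
  have hInt2 : ∫ x in G, f2 x
      = (∫ x in G, Real.exp (a * φ x - t)) / Real.exp c' + ψb⁻¹ * Ent - ψb⁻¹ * S := by
    have hadd : IntegrableOn (fun x => Real.exp (a * φ x - t) / Real.exp c'
        + ψb⁻¹ * (ψ x * Real.log (ψ x / ψb))) G := (hE.div_const _).add (hent.const_mul _)
    rw [hf2def, integral_sub hadd (hψint.const_mul _),
      integral_add (hE.div_const _) (hent.const_mul _), integral_div,
      integral_const_mul, integral_const_mul]
  set P := ∫ x in G, φ x * ψ x with hPdef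
  have hmain : a * ψb⁻¹ * P - c * ψb⁻¹ * S ≤ μG + ψb⁻¹ * Ent - ψb⁻¹ * S := by
    rw [hInt1, hInt2] at hmono
    have hEc : (∫ x in G, Real.exp (a * φ x - t)) / Real.exp c' ≤ μG :=
      (div_le_iff₀ (Real.exp_pos c')).mpr hEbound
    linarith
  -- clear ψb⁻¹ and conclude
  have hA : a * P ≤ Ent + c * S := by
    have h1 := mul_le_mul_of_nonneg_left hmain hψbpos.le
    have exp1 : ψb * (a * ψb⁻¹ * P - c * ψb⁻¹ * S) = a * P - c * S := by
      field_simp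
    have exp2 : ψb * (μG + ψb⁻¹ * Ent - ψb⁻¹ * S) = ψb * μG + Ent - S := by
      field_simp <;> ring
    have h3 : ψb * μG = S := by
      rw [hψbdef]; field_simp <;> ring
    rw [exp1, exp2, h3] at h1
    linarith
  -- rewrite the goal
  have hgoal : (∫ x in G, φ x * (ψ x - ψb)) = P - ψb * I := by
    have hfun : (fun x => φ x * (ψ x - ψb)) = fun x => φ x * ψ x - ψb * φ x := by
      funext x; ring
    rw [hfun, integral_sub hφψ (hφi.const_mul _), integral_const_mul]
  rw [hgoal]
  have hcS : c * S = 1 / (4 * β₀) * (a ^ 2 * D) * S + a * (ψb * I) := by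
    rw [hcdef, hc'def, htdef, hψbdef]; ring
  rw [hcS] at hA
  rw [show a / (4 * β₀) = a * (1 / (4 * β₀)) from by ring]
  rw [← mul_le_mul_iff_right₀ ha,
    show a * (1 / a * Ent + a * (1 / (4 * β₀)) * S * D)
      = Ent + 1 / (4 * β₀) * (a ^ 2 * D) * S from by field_simp]
  linarith
end

section
/- Let G be a finite measure space, β > 0, and let φ ∈ L^∞ with ∫_G φ = 0 and ∫_G e^{φ} ≥ |G| > 0. Suppose φ satisfies (1/(2β))∫_G |∇φ|² = −(1/|G|)∫_G φ + (∫_G φ e^{φ})/(∫_G e^{φ}) and ∫_G φ e^{φ} ≥ 0. If moreover the Poincaré inequality ∫_G |φ|² ≤ C_p² ∫_G |∇φ|² holds and ‖φ‖_∞ ≤ K, then (1/(2β))∫_G |∇φ|² ≤ (e^{K} C_p²/|G|)·∫_G |∇φ|². Consequently, if 2β e^{K} C_p² < |G|, then ∫_G |∇φ|² = 0. -/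
open MeasureTheory Real

lemma ptwise_key {t K : ℝ} (ht : |t| ≤ K) (hK : 0 ≤ K) :
    t * Real.exp t ≤ Real.exp K * t ^ 2 + t := by
  have habs := abs_le.mp ht
  rcases le_or_gt 0 t with h0 | h0
  · -- e^t - 1 ≤ t e^t ≤ t e^K
    have h1 : Real.exp t - 1 ≤ t * Real.exp t := by
      have := Real.add_one_le_exp (-t)
      have hpos := Real.exp_pos t
      have : (-t + 1) * Real.exp t ≤ Real.exp (-t) * Real.exp t := by
        nlinarith [Real.exp_pos (-t)]
      rw [← Real.exp_add] at this
      simp at this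
      nlinarith
    have h2 : Real.exp t ≤ Real.exp K := Real.exp_le_exp.mpr habs.2
    nlinarith
  · -- t < 0: t ≤ e^t - 1, so t(e^t -1) ≤ t² ≤ e^K t²
    have h1 : t + 1 ≤ Real.exp t := Real.add_one_le_exp t
    have h2 : (1:ℝ) ≤ Real.exp K := Real.one_le_exp hK
    nlinarith

/-- Small-`β` rigidity step: under the Euler–Lagrange identity, nonnegativity of
`∫ φ e^φ`, the Poincaré inequality and an `L^∞` bound, the Dirichlet energy is
absorbed, and vanishes when `2β e^K C_p² < |G|`. Here `g` plays the role of `|∇φ|`. -/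
theorem stmt_8 {α : Type*} [MeasurableSpace α] (μ : Measure α) [IsFiniteMeasure μ]
    (hpos : 0 < (μ Set.univ).toReal)
    (β : ℝ) (hβ : 0 < β)
    (φ : α → ℝ) (K : ℝ) (hbound : ∀ x, |φ x| ≤ K)
    (hφint : Integrable φ μ) (hmean : (∫ x, φ x ∂μ) = 0)
    (hexpint : Integrable (fun x => Real.exp (φ x)) μ)
    (hφexpint : Integrable (fun x => φ x * Real.exp (φ x)) μ)
    (hexplb : (μ Set.univ).toReal ≤ ∫ x, Real.exp (φ x) ∂μ)
    (g : α → ℝ) (hg : Integrable (fun x => g x ^ 2) μ)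
    (hEL : (1 / (2 * β)) * (∫ x, g x ^ 2 ∂μ) =
      -(μ Set.univ).toReal⁻¹ * (∫ x, φ x ∂μ) +
        (∫ x, φ x * Real.exp (φ x) ∂μ) / (∫ x, Real.exp (φ x) ∂μ))
    (hφexppos : 0 ≤ ∫ x, φ x * Real.exp (φ x) ∂μ)
    (Cp : ℝ) (hCp : 0 < Cp)
    (hPoincare : (∫ x, φ x ^ 2 ∂μ) ≤ Cp ^ 2 * ∫ x, g x ^ 2 ∂μ) :
    (1 / (2 * β)) * (∫ x, g x ^ 2 ∂μ) ≤
      (Real.exp K * Cp ^ 2 / (μ Set.univ).toReal) * (∫ x, g x ^ 2 ∂μ) ∧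
    (2 * β * Real.exp K * Cp ^ 2 < (μ Set.univ).toReal → (∫ x, g x ^ 2 ∂μ) = 0) := by
  have hne : Nonempty α := by
    by_contra h
    rw [not_nonempty_iff] at h
    have : (Set.univ : Set α) = ∅ := Set.univ_eq_empty_iff.mpr h
    rw [this] at hpos
    simp at hpos
  have hK : 0 ≤ K := le_trans (abs_nonneg _) (hbound (Classical.arbitrary α))
  -- φ² integrable
  have hφ2 : Integrable (fun x => φ x ^ 2) μ := by
    have : Integrable (fun x => K * |φ x|) μ := (hφint.abs.const_mul K)
    refine this.mono (hφint.aestronglyMeasurable.pow 2) ?_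
    filter_upwards with x
    have h1 := hbound x
    have h2 := abs_nonneg (φ x)
    simp only [Real.norm_eq_abs]
    rw [abs_of_nonneg (sq_nonneg (φ x)), abs_of_nonneg (mul_nonneg hK (abs_nonneg _))]
    nlinarith [sq_abs (φ x)]
  -- key integral bound
  have hkey : (∫ x, φ x * Real.exp (φ x) ∂μ) ≤ Real.exp K * ∫ x, φ x ^ 2 ∂μ := by
    have hmono : (∫ x, φ x * Real.exp (φ x) ∂μ) ≤
        ∫ x, (Real.exp K * φ x ^ 2 + φ x) ∂μ := by
      refine integral_mono hφexpint ((hφ2.const_mul _).add hφint) ?_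
      intro x
      exact ptwise_key (hbound x) hK
    rwa [integral_add (hφ2.const_mul _) hφint, integral_const_mul, hmean, add_zero] at hmono
  have hIg : 0 ≤ ∫ x, g x ^ 2 ∂μ := integral_nonneg fun x => sq_nonneg _
  have hE : 0 < ∫ x, Real.exp (φ x) ∂μ := lt_of_lt_of_le hpos hexplb
  have hmain : (1 / (2 * β)) * (∫ x, g x ^ 2 ∂μ) ≤
      (Real.exp K * Cp ^ 2 / (μ Set.univ).toReal) * (∫ x, g x ^ 2 ∂μ) := by
    rw [hEL, hmean, mul_zero, zero_add]
    have h1 : (∫ x, φ x * Real.exp (φ x) ∂μ) / (∫ x, Real.exp (φ x) ∂μ) ≤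
        (∫ x, φ x * Real.exp (φ x) ∂μ) / (μ Set.univ).toReal :=
      div_le_div_of_nonneg_left hφexppos hpos hexplb
    refine h1.trans ?_
    rw [div_mul_eq_mul_div]
    gcongr
    calc (∫ x, φ x * Real.exp (φ x) ∂μ) ≤ Real.exp K * ∫ x, φ x ^ 2 ∂μ := hkey
      _ ≤ Real.exp K * (Cp ^ 2 * ∫ x, g x ^ 2 ∂μ) := by
          exact mul_le_mul_of_nonneg_left hPoincare (Real.exp_pos K).le
      _ = Real.exp K * Cp ^ 2 * ∫ x, g x ^ 2 ∂μ := by ring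
  refine ⟨hmain, fun hsmall => ?_⟩
  have hc : Real.exp K * Cp ^ 2 / (μ Set.univ).toReal < 1 / (2 * β) := by
    rw [div_lt_div_iff₀ hpos (by linarith)]
    nlinarith
  nlinarith
end

section
/- Let G be a finite measure space and let φ_k → φ in L²(G) with the family (∫_G e^{2|φ_k| + 2|φ|})_{k} uniformly bounded by some M > 0. Then ∫_G e^{φ_k} → ∫_G e^{φ} as k → ∞. -/
open MeasureTheory Real Filter

/-- `|exp a - exp b| ≤ |a - b| * exp (|a| + |b|)`. -/
lemma abs_exp_sub_exp_le (a b : ℝ) :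
    |Real.exp a - Real.exp b| ≤ |a - b| * Real.exp (|a| + |b|) := by
  have key : ∀ x y : ℝ, Real.exp x - Real.exp y ≤ (x - y) * Real.exp x := by
    intro x y
    have h := Real.add_one_le_exp (y - x)
    have h2 := mul_le_mul_of_nonneg_left h (Real.exp_pos x).le
    have h3 : Real.exp x * Real.exp (y - x) = Real.exp y := by
      rw [← Real.exp_add]; ring_nf
    nlinarith [Real.exp_pos x, Real.exp_pos y]
  rcases le_total (Real.exp b) (Real.exp a) with h | h
  · rw [abs_of_nonneg (by linarith)]
    calc Real.exp a - Real.exp b ≤ (a - b) * Real.exp a := key a b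
      _ ≤ |a - b| * Real.exp (|a| + |b|) := by
          apply mul_le_mul (le_abs_self _) (Real.exp_le_exp.2 (by
            have := abs_nonneg b; linarith [le_abs_self a])) (Real.exp_pos a).le (abs_nonneg _)
  · rw [abs_of_nonpos (by linarith), neg_sub]
    calc Real.exp b - Real.exp a ≤ (b - a) * Real.exp b := key b a
      _ ≤ |a - b| * Real.exp (|a| + |b|) := by
          apply mul_le_mul (by rw [abs_sub_comm]; exact le_abs_self _)
            (Real.exp_le_exp.2 (by have := abs_nonneg a; linarith [le_abs_self b]))
            (Real.exp_pos b).le (abs_nonneg _)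

lemma abs_le_exp_abs (t : ℝ) : |t| ≤ Real.exp |t| :=
  le_trans (by linarith) (Real.add_one_le_exp |t|)

/-- Continuity of the exponential integral under `L²` convergence with a uniform
exponential moment bound. -/
theorem stmt_10 {α : Type*} [MeasurableSpace α] (μ : Measure α) [IsFiniteMeasure μ]
    (φk : ℕ → α → ℝ) (φ : α → ℝ)
    (hφkmeas : ∀ k, Measurable (φk k)) (hφmeas : Measurable φ)
    (hL2 : Tendsto (fun k => ∫ x, (φk k x - φ x) ^ 2 ∂μ) atTop (nhds 0))
    (M : ℝ) (hM : 0 < M)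
    (hexpk : ∀ k, Integrable (fun x => Real.exp (φk k x)) μ)
    (hexp : Integrable (fun x => Real.exp (φ x)) μ)
    (hunif : ∀ k, Integrable (fun x => Real.exp (2 * |φk k x| + 2 * |φ x|)) μ)
    (hbound : ∀ k, (∫ x, Real.exp (2 * |φk k x| + 2 * |φ x|) ∂μ) ≤ M) :
    Tendsto (fun k => ∫ x, Real.exp (φk k x) ∂μ) atTop
      (nhds (∫ x, Real.exp (φ x) ∂μ)) := by
  -- square of difference is integrable
  have hmeasd : ∀ k, Measurable (fun x => φk k x - φ x) := fun k => (hφkmeas k).sub hφmeas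
  have hsq_le : ∀ k x, (φk k x - φ x) ^ 2 ≤ Real.exp (2 * |φk k x| + 2 * |φ x|) := by
    intro k x
    have h1 : |φk k x - φ x| ≤ Real.exp (|φk k x| + |φ x|) :=
      (abs_le_exp_abs _).trans (Real.exp_le_exp.2 ((abs_sub _ _)))
    calc (φk k x - φ x) ^ 2 = |φk k x - φ x| ^ 2 := (sq_abs _).symm
      _ ≤ (Real.exp (|φk k x| + |φ x|)) ^ 2 := by
          exact pow_le_pow_left₀ (abs_nonneg _) h1 2
      _ = Real.exp (2 * |φk k x| + 2 * |φ x|) := by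
          rw [← Real.exp_nat_mul]; ring_nf
  have hsq_int : ∀ k, Integrable (fun x => (φk k x - φ x) ^ 2) μ := by
    intro k
    refine (hunif k).mono ((hmeasd k).pow_const 2).aestronglyMeasurable ?_
    filter_upwards with x
    rw [Real.norm_eq_abs, Real.norm_eq_abs, abs_of_nonneg (sq_nonneg _),
      abs_of_nonneg (Real.exp_pos _).le]
    exact hsq_le k x
  -- key bound
  have key : ∀ k, |(∫ x, Real.exp (φk k x) ∂μ) - ∫ x, Real.exp (φ x) ∂μ|
      ≤ (∫ x, (φk k x - φ x) ^ 2 ∂μ) ^ ((1:ℝ)/2) * M ^ ((1:ℝ)/2) := by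
    intro k
    have hdint : Integrable (fun x => Real.exp (φk k x) - Real.exp (φ x)) μ :=
      (hexpk k).sub hexp
    have hprod_int : Integrable (fun x => |φk k x - φ x| * Real.exp (|φk k x| + |φ x|)) μ := by
      refine (hunif k).mono (((hmeasd k).abs.mul
        ((((hφkmeas k).abs.add hφmeas.abs)).exp)).aestronglyMeasurable) ?_
      filter_upwards with x
      rw [Real.norm_eq_abs, Real.norm_eq_abs, abs_of_nonneg (Real.exp_pos _).le,
        abs_of_nonneg (mul_nonneg (abs_nonneg _) (Real.exp_pos _).le)]
      calc |φk k x - φ x| * Real.exp (|φk k x| + |φ x|)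
          ≤ Real.exp (|φk k x| + |φ x|) * Real.exp (|φk k x| + |φ x|) := by
            apply mul_le_mul_of_nonneg_right _ (Real.exp_pos _).le
            exact (abs_le_exp_abs _).trans (Real.exp_le_exp.2 (abs_sub _ _))
        _ = Real.exp (2 * |φk k x| + 2 * |φ x|) := by rw [← Real.exp_add]; ring_nf
    calc |(∫ x, Real.exp (φk k x) ∂μ) - ∫ x, Real.exp (φ x) ∂μ|
        = |∫ x, (Real.exp (φk k x) - Real.exp (φ x)) ∂μ| := by
          rw [integral_sub (hexpk k) hexp]
      _ ≤ ∫ x, |Real.exp (φk k x) - Real.exp (φ x)| ∂μ := by simpa [Real.norm_eq_abs] using norm_integral_le_integral_norm (μ := μ) (fun x => Real.exp (φk k x) - Real.exp (φ x))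
      _ ≤ ∫ x, |φk k x - φ x| * Real.exp (|φk k x| + |φ x|) ∂μ := by
          refine integral_mono hdint.abs hprod_int ?_
          intro x; exact abs_exp_sub_exp_le _ _
      _ ≤ (∫ x, |φk k x - φ x| ^ (2:ℝ) ∂μ) ^ ((1:ℝ)/2)
            * (∫ x, (Real.exp (|φk k x| + |φ x|)) ^ (2:ℝ) ∂μ) ^ ((1:ℝ)/2) := by
          apply integral_mul_le_Lp_mul_Lq_of_nonneg Real.HolderConjugate.two_two
            (Filter.Eventually.of_forall fun x => abs_nonneg _)
            (Filter.Eventually.of_forall fun x => (Real.exp_pos _).le)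
          · rw [show ENNReal.ofReal (2:ℝ) = 2 by norm_num]
            exact (memLp_two_iff_integrable_sq (hmeasd k).abs.aestronglyMeasurable).2
              (by simpa [sq_abs] using hsq_int k)
          · rw [show ENNReal.ofReal (2:ℝ) = 2 by norm_num]
            refine (memLp_two_iff_integrable_sq
              (((hφkmeas k).abs.add hφmeas.abs).exp).aestronglyMeasurable).2 ?_
            have : (fun x => (Real.exp (|φk k x| + |φ x|)) ^ 2)
                = fun x => Real.exp (2 * |φk k x| + 2 * |φ x|) := by
              funext x; rw [← Real.exp_nat_mul]; ring_nf
            change Integrable (fun x => (Real.exp (|φk k x| + |φ x|)) ^ 2) μ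
            rw [this]; exact hunif k
      _ ≤ (∫ x, (φk k x - φ x) ^ 2 ∂μ) ^ ((1:ℝ)/2) * M ^ ((1:ℝ)/2) := by
          have h1 : (∫ x, |φk k x - φ x| ^ (2:ℝ) ∂μ) = ∫ x, (φk k x - φ x) ^ 2 ∂μ := by
            apply integral_congr_ae; filter_upwards with x
            rw [show (2:ℝ) = ((2:ℕ):ℝ) by norm_num, Real.rpow_natCast, sq_abs]
          have h2 : (∫ x, (Real.exp (|φk k x| + |φ x|)) ^ (2:ℝ) ∂μ)
              = ∫ x, Real.exp (2 * |φk k x| + 2 * |φ x|) ∂μ := by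
            apply integral_congr_ae; filter_upwards with x
            rw [show (2:ℝ) = ((2:ℕ):ℝ) by norm_num, Real.rpow_natCast, ← Real.exp_nat_mul]
            ring_nf
          rw [h1, h2]
          have hnn : (0:ℝ) ≤ (∫ x, (φk k x - φ x) ^ 2 ∂μ) ^ ((1:ℝ)/2) :=
            Real.rpow_nonneg (integral_nonneg fun x => sq_nonneg _) _
          exact mul_le_mul_of_nonneg_left
            (Real.rpow_le_rpow (integral_nonneg fun x => (Real.exp_pos _).le)
              (hbound k) (by norm_num)) hnn
  -- squeeze
  have hlim : Tendsto (fun k => (∫ x, (φk k x - φ x) ^ 2 ∂μ) ^ ((1:ℝ)/2) * M ^ ((1:ℝ)/2))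
      atTop (nhds 0) := by
    have h0 : ((0:ℝ)) ^ ((1:ℝ)/2) * M ^ ((1:ℝ)/2) = 0 := by
      rw [Real.zero_rpow (by norm_num)]; ring
    rw [← h0]
    exact ((Real.continuousAt_rpow_const 0 _ (Or.inr (by norm_num))).tendsto.comp
      hL2).mul_const _
  rw [tendsto_iff_dist_tendsto_zero]
  apply squeeze_zero (fun k => dist_nonneg) (fun k => ?_) hlim
  rw [Real.dist_eq]
  exact key k
end

section
/- Let y : [t₀, ∞) → [0, ∞) be continuously differentiable with y'(t) ≤ K₃ y(t)² + K₄ for all t ≥ t₀, where K₃, K₄ > 0, and suppose ∫_{t₀}^{∞} y(s) ds ≤ 1 and y(t₀) ≤ 1. Then y(t) ≤ (1 + K₄) e^{K₃} for all t ∈ [t₀, t₀ + 1]. -/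
open MeasureTheory Real Set intervalIntegral

/-- Quantitative comparison argument from Lemma 3.9. -/
theorem stmt_13 (t₀ K₃ K₄ : ℝ) (hK₃ : 0 < K₃) (hK₄ : 0 < K₄)
    (y y' : ℝ → ℝ)
    (hy0 : ∀ t, t₀ ≤ t → 0 ≤ y t)
    (hy'c : ContinuousOn y' (Ici t₀))
    (hderiv : ∀ t, t₀ ≤ t → HasDerivAt y (y' t) t)
    (hineq : ∀ t, t₀ ≤ t → y' t ≤ K₃ * y t ^ 2 + K₄)
    (hint : ∀ T, t₀ ≤ T → (∫ s in t₀..T, y s) ≤ 1)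
    (hinit : y t₀ ≤ 1) :
    ∀ t ∈ Icc t₀ (t₀ + 1), y t ≤ (1 + K₄) * Real.exp K₃ := by
  intro t ht
  obtain ⟨ht0, ht1⟩ := ht
  have hle1 : t₀ ≤ t₀ + 1 := by linarith
  have hyc : ContinuousOn y (Ici t₀) := fun s hs =>
    (hderiv s hs).continuousAt.continuousWithinAt
  set Y : ℝ → ℝ := fun u => ∫ s in t₀..u, y s with hYdef
  have hYint : ∀ u, t₀ ≤ u → IntervalIntegrable y volume t₀ u := by
    intro u hu
    apply ContinuousOn.intervalIntegrable
    apply hyc.mono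
    rw [uIcc_of_le hu]
    exact Icc_subset_Ici_self
  have hYderiv : ∀ u, t₀ < u → HasDerivAt Y (y u) u := by
    intro u hu
    have hmeas : StronglyMeasurableAtFilter y (nhds u) volume :=
      (hyc.mono Ioi_subset_Ici_self).stronglyMeasurableAtFilter isOpen_Ioi u hu
    exact intervalIntegral.integral_hasDerivAt_right (hYint u hu.le) hmeas
      ((hyc u hu.le).continuousAt (Ici_mem_nhds hu))
  have hYnonneg : ∀ u, t₀ ≤ u → 0 ≤ Y u := by
    intro u hu
    exact intervalIntegral.integral_nonneg hu (fun s hs => hy0 s hs.1)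
  have hYle : ∀ u, t₀ ≤ u → Y u ≤ 1 := fun u hu => hint u hu
  have hYcont : ContinuousOn Y (Icc t₀ (t₀ + 1)) := by
    have := intervalIntegral.continuousOn_primitive_interval'
      (μ := volume) (f := y) (b₁ := t₀) (b₂ := t₀ + 1) (a := t₀)
      (hYint (t₀ + 1) hle1) (by rw [uIcc_of_le hle1]; exact left_mem_Icc.2 hle1)
    rwa [uIcc_of_le hle1] at this
  -- the auxiliary function
  set h : ℝ → ℝ := fun u => y u * Real.exp (-(K₃ * Y u)) - K₄ * (u - t₀) with hhdef
  have hcont : ContinuousOn h (Icc t₀ (t₀ + 1)) := by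
    apply ContinuousOn.sub
    · exact ((hyc.mono Icc_subset_Ici_self).mul
        (((continuousOn_const.mul hYcont).neg).rexp))
    · fun_prop
  have hderivh : ∀ u ∈ Ioo t₀ (t₀ + 1), HasDerivAt h
      ((y' u - K₃ * y u ^ 2) * Real.exp (-(K₃ * Y u)) - K₄) u := by
    intro u hu
    have h1 : HasDerivAt (fun v => -(K₃ * Y v)) (-(K₃ * y u)) u :=
      ((hYderiv u hu.1).const_mul K₃).neg
    have h2 : HasDerivAt (fun v => Real.exp (-(K₃ * Y v)))
        (Real.exp (-(K₃ * Y u)) * (-(K₃ * y u))) u := h1.exp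
    have h3 : HasDerivAt (fun v => y v * Real.exp (-(K₃ * Y v)))
        (y' u * Real.exp (-(K₃ * Y u)) +
          y u * (Real.exp (-(K₃ * Y u)) * (-(K₃ * y u)))) u :=
      (hderiv u hu.1.le).mul h2
    have h4 : HasDerivAt (fun v => K₄ * (v - t₀)) K₄ u := by
      simpa using ((hasDerivAt_id u).sub_const t₀).const_mul K₄
    have : HasDerivAt (fun v => y v * Real.exp (-(K₃ * Y v)) - K₄ * (v - t₀)) _ u := h3.sub h4
    convert this using 1
    ring
  have hnonpos : ∀ u ∈ Ioo t₀ (t₀ + 1),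
      (y' u - K₃ * y u ^ 2) * Real.exp (-(K₃ * Y u)) - K₄ ≤ 0 := by
    intro u hu
    have hE1 : Real.exp (-(K₃ * Y u)) ≤ 1 := by
      rw [Real.exp_le_one_iff]
      have := hYnonneg u hu.1.le
      nlinarith
    have hE0 : 0 < Real.exp (-(K₃ * Y u)) := Real.exp_pos _
    have := hineq u hu.1.le
    nlinarith
  have hanti : AntitoneOn h (Icc t₀ (t₀ + 1)) := by
    apply antitoneOn_of_deriv_nonpos (convex_Icc _ _) hcont
    · intro u hu
      rw [interior_Icc] at hu
      exact ((hderivh u hu).differentiableAt).differentiableWithinAt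
    · intro u hu
      rw [interior_Icc] at hu
      rw [(hderivh u hu).deriv]
      exact hnonpos u hu
  have hht : h t ≤ h t₀ := hanti (left_mem_Icc.2 hle1) ⟨ht0, ht1⟩ ht0
  have hht0 : h t₀ = y t₀ := by
    simp [hhdef, hYdef, intervalIntegral.integral_same]
  rw [hht0] at hht
  -- unwind
  have key : y t * Real.exp (-(K₃ * Y t)) ≤ 1 + K₄ * (t - t₀) := by
    have : h t = y t * Real.exp (-(K₃ * Y t)) - K₄ * (t - t₀) := rfl
    linarith [hht, hinit]
  have hEpos : 0 < Real.exp (-(K₃ * Y t)) := Real.exp_pos _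
  have hyt : y t ≤ (1 + K₄ * (t - t₀)) * Real.exp (K₃ * Y t) := by
    have := mul_le_mul_of_nonneg_right key (Real.exp_pos (K₃ * Y t)).le
    rwa [mul_assoc, ← Real.exp_add, neg_add_cancel, Real.exp_zero, mul_one] at this
  have h5 : Real.exp (K₃ * Y t) ≤ Real.exp K₃ := by
    apply Real.exp_le_exp.2
    have := hYle t ht0
    nlinarith
  have h6 : 1 + K₄ * (t - t₀) ≤ 1 + K₄ := by nlinarith
  calc y t ≤ (1 + K₄ * (t - t₀)) * Real.exp (K₃ * Y t) := hyt
    _ ≤ (1 + K₄) * Real.exp K₃ := by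
        apply mul_le_mul h6 h5 (Real.exp_pos _).le
        nlinarith
end
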